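/- For any finite connected simple graph G, the independence number of G is at most the number of vertices of G minus the radius of G, i.e., α(G) ≤ n(G) − r(G). -/

import Mathlib

/-- A finset of vertices is an independent set if no two of its vertices are adjacent. -/
def SimpleGraph.IsIndepFinset {V : Type*} (G : SimpleGraph V) (s : Finset V) : Prop :=
  ∀ u ∈ s, ∀ w ∈ s, u ≠ w → ¬ G.Adj u w

/-- The independence number: the largest cardinality of an independent set of vertices. -/
noncomputable def SimpleGraph.indepNum' {V : Type*} (G : SimpleGraph V) : ℕ :=
  sSup {n | ∃ s : Finset V, G.IsIndepFinset s ∧ s.card = n}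

/-- The eccentricity of a vertex: the maximum distance from it to any vertex. -/
noncomputable def SimpleGraph.eccentricity {V : Type*} [Fintype V] (G : SimpleGraph V) (v : V) : ℕ :=
  Finset.univ.sup (fun u => G.dist v u)

/-- The radius of a graph: the minimum eccentricity over all vertices. -/
noncomputable def SimpleGraph.graphRadius {V : Type*} [Fintype V] [Nonempty V]
    (G : SimpleGraph V) : ℕ :=
  Finset.univ.inf' Finset.univ_nonempty (fun v => G.eccentricity v)

namespace IndepRadius
open SimpleGraph Finset

variable {V : Type*} {G : SimpleGraph V}

/-- The distance from the start of a walk to its `j`-th vertex is at most `j`. -/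
lemma dist_getVert_le (hc : G.Connected) {x y : V} (p : G.Walk x y) (j : ℕ) :
    G.dist x (p.getVert j) ≤ j := by
  induction p generalizing j with
  | nil =>
    rw [SimpleGraph.Walk.getVert_of_length_le _ (by simp : (SimpleGraph.Walk.nil : G.Walk _ _).length ≤ j)]
    simp [SimpleGraph.dist_self]
  | @cons a v y h q ih =>
    cases j with
    | zero => simp
    | succ n =>
      rw [SimpleGraph.Walk.getVert_cons_succ]
      calc G.dist a (q.getVert n) ≤ G.dist a v + G.dist v (q.getVert n) := hc.dist_triangle
        _ ≤ 1 + n := by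
            have h1 : G.dist a v ≤ 1 := by
              have := G.dist_le (SimpleGraph.Walk.cons h SimpleGraph.Walk.nil)
              simpa using this
            exact Nat.add_le_add h1 (ih n)
        _ = n + 1 := by omega

lemma dist_getVert_right_le (hc : G.Connected) {x y : V} (p : G.Walk x y) {j : ℕ}
    (hj : j ≤ p.length) : G.dist (p.getVert j) y ≤ p.length - j := by
  have := dist_getVert_le hc p.reverse (p.length - j)
  rw [SimpleGraph.Walk.getVert_reverse, Nat.sub_sub_self hj] at this
  rw [SimpleGraph.dist_comm]
  exact this

/-- On a shortest walk, the `j`-th vertex is at distance exactly `j` from the start. -/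
lemma shortest_getVert_dist (hc : G.Connected) {x y : V} (p : G.Walk x y)
    (hshort : p.length = G.dist x y) {j : ℕ} (hj : j ≤ p.length) :
    G.dist x (p.getVert j) = j ∧ G.dist (p.getVert j) y = p.length - j := by
  have h1 := dist_getVert_le hc p j
  have h2 := dist_getVert_right_le hc p hj
  have h3 : G.dist x y ≤ G.dist x (p.getVert j) + G.dist (p.getVert j) y := hc.dist_triangle
  omega

/-- In an acyclic graph every path realizes the distance. -/
lemma path_length_eq (ha : G.IsAcyclic) {u v : V} (p : G.Walk u v) (hp : p.IsPath) :
    p.length = G.dist u v := by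
  obtain ⟨q, hq, hlen⟩ := SimpleGraph.Reachable.exists_path_of_dist ⟨p⟩
  have := ha.path_unique ⟨p, hp⟩ ⟨q, hq⟩
  rw [← hlen]
  exact congrArg (fun r : G.Path u v => r.1.length) this

lemma concat_isPath (_ha : G.IsAcyclic) {u b c : V} {R : G.Walk u b} (hR : R.IsPath)
    (h : G.Adj b c) (hmem : c ∉ R.support) : (R.concat h).IsPath := by
  rw [← SimpleGraph.Walk.isPath_reverse_iff, SimpleGraph.Walk.reverse_concat,
    SimpleGraph.Walk.cons_isPath_iff]
  refine ⟨hR.reverse, by simpa using hmem⟩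

/-- In a tree, distances to the two endpoints of an edge differ by exactly one. -/
lemma adj_dist_cases (ha : G.IsAcyclic) (hc : G.Connected) (u : V) {b c : V} (h : G.Adj b c) :
    G.dist u c = G.dist u b + 1 ∨ G.dist u b = G.dist u c + 1 := by
  classical
  obtain ⟨R, hR, hRlen⟩ := (hc u b).exists_path_of_dist
  by_cases hmem : c ∈ R.support
  · right
    have h1 : (R.takeUntil c hmem).length = G.dist u c :=
      path_length_eq ha _ (hR.takeUntil hmem)
    have h2 : (R.dropUntil c hmem).length = G.dist c b :=
      path_length_eq ha _ (hR.dropUntil hmem)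
    have h3 : (R.takeUntil c hmem).length + (R.dropUntil c hmem).length = R.length := by
      rw [← SimpleGraph.Walk.length_append, SimpleGraph.Walk.take_spec]
    have h4 : G.dist c b = 1 := by rw [SimpleGraph.dist_eq_one_iff_adj]; exact h.symm
    omega
  · left
    have hW : (R.concat h).IsPath := concat_isPath ha hR h hmem
    have := path_length_eq ha _ hW
    rw [SimpleGraph.Walk.length_concat] at this
    omega

/-- In a tree, a vertex has at most one neighbor closer to `u`. -/
lemma lower_nbr_unique (ha : G.IsAcyclic) (hc : G.Connected) (u : V) {b b' c : V}
    (hb : G.Adj b c) (hb' : G.Adj b' c)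
    (h1 : G.dist u b + 1 = G.dist u c) (h2 : G.dist u b' + 1 = G.dist u c) : b = b' := by
  classical
  obtain ⟨R, hR, hRlen⟩ := (hc u b).exists_path_of_dist
  obtain ⟨R', hR', hRlen'⟩ := (hc u b').exists_path_of_dist
  have hmem : c ∉ R.support := by
    intro hmem
    have ha1 : (R.takeUntil c hmem).length = G.dist u c :=
      path_length_eq ha _ (hR.takeUntil hmem)
    have ha2 : (R.dropUntil c hmem).length = G.dist c b :=
      path_length_eq ha _ (hR.dropUntil hmem)
    have ha3 : (R.takeUntil c hmem).length + (R.dropUntil c hmem).length = R.length := by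
      rw [← SimpleGraph.Walk.length_append, SimpleGraph.Walk.take_spec]
    have ha4 : G.dist c b = 1 := by rw [SimpleGraph.dist_eq_one_iff_adj]; exact hb.symm
    omega
  have hmem' : c ∉ R'.support := by
    intro hmem'
    have ha1 : (R'.takeUntil c hmem').length = G.dist u c :=
      path_length_eq ha _ (hR'.takeUntil hmem')
    have ha2 : (R'.dropUntil c hmem').length = G.dist c b' :=
      path_length_eq ha _ (hR'.dropUntil hmem')
    have ha3 : (R'.takeUntil c hmem').length + (R'.dropUntil c hmem').length = R'.length := by
      rw [← SimpleGraph.Walk.length_append, SimpleGraph.Walk.take_spec]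
    have ha4 : G.dist c b' = 1 := by rw [SimpleGraph.dist_eq_one_iff_adj]; exact hb'.symm
    omega
  have hW : (R.concat hb).IsPath := concat_isPath ha hR hb hmem
  have hW' : (R'.concat hb').IsPath := concat_isPath ha hR' hb' hmem'
  have hu := ha.path_unique ⟨R.concat hb, hW⟩ ⟨R'.concat hb', hW'⟩
  have hwe : R.concat hb = R'.concat hb' := congrArg Subtype.val hu
  obtain ⟨hv, -⟩ := SimpleGraph.Walk.concat_inj hwe
  exact hv

/-- Tree-center lemma: the midpoint of a diametral shortest path in a tree
has eccentricity at most `⌈d/2⌉`. -/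
lemma center_dist_le (ha : G.IsAcyclic) (hc : G.Connected) {x y : V} (p : G.Walk x y)
    (hshort : p.length = G.dist x y) (hmax : ∀ a b : V, G.dist a b ≤ p.length) (u : V) :
    G.dist u (p.getVert ((p.length + 1) / 2)) ≤ (p.length + 1) / 2 := by
  set d := p.length with hd
  set k := (d + 1) / 2 with hk
  have hkd : k ≤ d := by
    rcases Nat.eq_zero_or_pos d with h0 | h0
    · omega
    · omega
  set g : ℕ → ℕ := fun j => G.dist u (p.getVert j) with hg
  have steps : ∀ j, j < d → g (j + 1) = g j + 1 ∨ g j = g (j + 1) + 1 := by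
    intro j hj
    exact adj_dist_cases ha hc u (p.adj_getVert_succ hj)
  have nolocal : ∀ j, 0 < j → j < d → g (j - 1) + 1 = g j → g (j + 1) + 1 = g j → False := by
    intro j hj0 hjd e1 e2
    have hadj1 : G.Adj (p.getVert (j - 1)) (p.getVert j) := by
      have := p.adj_getVert_succ (i := j - 1) (by omega)
      have hj1 : j - 1 + 1 = j := by omega
      rwa [hj1] at this
    have hadj2 : G.Adj (p.getVert (j + 1)) (p.getVert j) := (p.adj_getVert_succ hjd).symm
    have heq := lower_nbr_unique ha hc u hadj1 hadj2 e1 e2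
    have d1 : G.dist x (p.getVert (j - 1)) = j - 1 :=
      (shortest_getVert_dist hc p hshort (by omega)).1
    have d2 : G.dist x (p.getVert (j + 1)) = j + 1 :=
      (shortest_getVert_dist hc p hshort (by omega)).1
    rw [heq] at d1
    omega
  have ascprop : ∀ j, j < d → g (j + 1) = g j + 1 →
      ∀ t, j ≤ t → t < d → g (t + 1) = g t + 1 := by
    intro j hjd hasc t hjt htd
    induction t, hjt using Nat.le_induction with
    | base => exact hasc
    | succ t hjt ih =>
      have htd' : t < d := by omega
      have h1 : g (t + 1) = g t + 1 := ih htd'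
      rcases steps (t + 1) htd with h2 | h2
      · exact h2
      · exfalso
        exact nolocal (t + 1) (by omega) htd (by simpa using h1.symm) (by omega)
  have g0 : g 0 ≤ d := by
    have := hmax u x
    simpa [hg, p.getVert_zero] using this
  have gd : g d ≤ d := by
    have := hmax u y
    simpa [hg, p.getVert_of_length_le (i := d) le_rfl] using this
  by_cases hasc : ∃ j, j < k ∧ g (j + 1) = g j + 1
  · obtain ⟨j, hjk, hj⟩ := hasc
    have hsum : ∀ t, k ≤ t → t ≤ d → g t = g k + (t - k) := by
      intro t hkt htd
      induction t, hkt using Nat.le_induction with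
      | base => omega
      | succ t hkt ih =>
        have h1 : g (t + 1) = g t + 1 :=
          ascprop j (by omega) hj t (by omega) (by omega)
        have h2 := ih (by omega)
        omega
    have := hsum d hkd le_rfl
    show g k ≤ k
    omega
  · push_neg at hasc
    have hsum : ∀ t, t ≤ k → g t + t = g 0 := by
      intro t htk
      induction t with
      | zero => omega
      | succ t ih =>
        have h1 := ih (by omega)
        rcases steps t (by omega) with h2 | h2
        · exact absurd h2 (hasc t (by omega))
        · omega
    have := hsum k le_rfl
    show g k ≤ k
    omega

/-- Counting along alternating edges of a shortest path. -/
lemma indep_add_le [Fintype V] (hc : G.Connected) {x y : V} (p : G.Walk x y)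
    (hshort : p.length = G.dist x y) {A : Finset V} (hA : G.IsIndepFinset A) :
    A.card + (p.length + 1) / 2 ≤ Fintype.card V := by
  classical
  set d := p.length with hd
  set k := (d + 1) / 2 with hk
  set f : ℕ → V := fun i =>
    if p.getVert (2 * i + 1) ∈ A then p.getVert (2 * i) else p.getVert (2 * i + 1) with hf
  have hfd : ∀ i, i < k → G.dist x (f i) = 2 * i ∨ G.dist x (f i) = 2 * i + 1 := by
    intro i hi
    have h1 : 2 * i + 1 ≤ d := by omega
    by_cases hmem : p.getVert (2 * i + 1) ∈ A
    · left
      simp only [hf, if_pos hmem]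
      exact (shortest_getVert_dist hc p hshort (by omega : 2 * i ≤ p.length)).1
    · right
      simp only [hf, if_neg hmem]
      exact (shortest_getVert_dist hc p hshort (by omega : 2 * i + 1 ≤ p.length)).1
  have hfA : ∀ i, i < k → f i ∉ A := by
    intro i hi
    have h1 : 2 * i + 1 ≤ d := by omega
    by_cases hmem : p.getVert (2 * i + 1) ∈ A
    · simp only [hf, if_pos hmem]
      intro hmem2
      have hadj : G.Adj (p.getVert (2 * i)) (p.getVert (2 * i + 1)) :=
        p.adj_getVert_succ (by omega)
      exact hA _ hmem2 _ hmem hadj.ne hadj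
    · simp only [hf, if_neg hmem]
      exact hmem
  have hinj : Set.InjOn f (Finset.range k) := by
    intro i hi j hj hij
    simp only [Finset.coe_range, Set.mem_Iio] at hi hj
    rcases hfd i hi with h1 | h1 <;> rcases hfd j hj with h2 | h2 <;>
      (rw [hij] at h1; omega)
  have hcard : ((Finset.range k).image f).card = k := by
    rw [Finset.card_image_of_injOn hinj, Finset.card_range]
  have hdisj : Disjoint A ((Finset.range k).image f) := by
    rw [Finset.disjoint_right]
    intro a hmem hmemA
    obtain ⟨i, hi, rfl⟩ := Finset.mem_image.mp hmem
    exact hfA i (Finset.mem_range.mp hi) hmemA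
  calc A.card + k = (A ∪ (Finset.range k).image f).card := by
        rw [Finset.card_union_of_disjoint hdisj, hcard]
    _ ≤ Fintype.card V := Finset.card_le_univ _

lemma tree_case [Fintype V] [Nonempty V] (G : SimpleGraph V) (hc : G.Connected)
    (ha : G.IsAcyclic) (A : Finset V) (hA : G.IsIndepFinset A) :
    A.card + G.graphRadius ≤ Fintype.card V := by
  obtain ⟨z, -, hz⟩ := Finset.exists_max_image Finset.univ
    (fun pq : V × V => G.dist pq.1 pq.2) ⟨(Classical.arbitrary V, Classical.arbitrary V),
      Finset.mem_univ _⟩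
  obtain ⟨p, hp, hplen⟩ := (hc z.1 z.2).exists_path_of_dist
  have hplen' : p.length = G.dist z.1 z.2 := hplen
  have hmax : ∀ a b : V, G.dist a b ≤ p.length := by
    intro a b
    have := hz (a, b) (Finset.mem_univ _)
    simp only at this
    omega
  have hcen := center_dist_le ha hc p hplen' hmax
  have hrad : G.graphRadius ≤ (p.length + 1) / 2 := by
    refine le_trans (Finset.inf'_le _ (Finset.mem_univ (p.getVert ((p.length + 1) / 2)))) ?_
    refine Finset.sup_le fun u _ => ?_
    rw [SimpleGraph.dist_comm]
    exact hcen u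
  have := indep_add_le hc p hplen' hA
  omega

lemma radius_mono [Fintype V] [Nonempty V] {G G' : SimpleGraph V} (hle : G' ≤ G)
    (hc' : G'.Connected) : G.graphRadius ≤ G'.graphRadius := by
  obtain ⟨c, -, hcmin⟩ := Finset.exists_mem_eq_inf' (Finset.univ_nonempty)
    (fun v => G'.eccentricity v)
  calc G.graphRadius ≤ G.eccentricity c := Finset.inf'_le _ (Finset.mem_univ c)
    _ ≤ G'.eccentricity c := by
        refine Finset.sup_le fun u _ => ?_
        exact le_trans (SimpleGraph.Reachable.dist_anti hle (hc' c u))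
          (Finset.le_sup (Finset.mem_univ u))
    _ = G'.graphRadius := hcmin.symm

lemma connected_sdiff (hc : G.Connected) {a b : V}
    (hr : (G \ SimpleGraph.fromEdgeSet {s(a, b)}).Reachable a b) :
    (G \ SimpleGraph.fromEdgeSet {s(a, b)}).Connected := by
  rw [SimpleGraph.connected_iff]
  refine ⟨fun u v => ?_, hc.nonempty⟩
  obtain ⟨w⟩ := hc.preconnected u v
  induction w with
  | nil => exact SimpleGraph.Reachable.refl _
  | @cons u u' v h q ih =>
    refine SimpleGraph.Reachable.trans ?_ ih
    by_cases he : s(u, u') = s(a, b)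
    · rw [Sym2.eq_iff] at he
      rcases he with ⟨rfl, rfl⟩ | ⟨rfl, rfl⟩
      · exact hr
      · exact hr.symm
    · refine SimpleGraph.Adj.reachable ?_
      rw [SimpleGraph.sdiff_adj]
      refine ⟨h, ?_⟩
      rw [SimpleGraph.fromEdgeSet_adj]
      rintro ⟨hmem, -⟩
      exact he (Set.mem_singleton_iff.mp hmem)

lemma key [Fintype V] [Nonempty V] :
    ∀ (N : ℕ) (G : SimpleGraph V), G.edgeSet.ncard ≤ N → G.Connected →
      ∀ A : Finset V, G.IsIndepFinset A → A.card + G.graphRadius ≤ Fintype.card V := by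
  intro N
  induction N with
  | zero =>
    intro G hN hc A hA
    have hempty : G.edgeSet = ∅ :=
      (Set.ncard_eq_zero (Set.toFinite _)).mp (le_antisymm hN (Nat.zero_le _))
    have hbot : G = ⊥ := by rwa [← SimpleGraph.edgeSet_eq_empty]
    exact tree_case G hc (by rw [hbot]; exact SimpleGraph.isAcyclic_bot) A hA
  | succ n ih =>
    intro G hN hc A hA
    by_cases hac : G.IsAcyclic
    · exact tree_case G hc hac A hA
    · rw [SimpleGraph.isAcyclic_iff_forall_edge_isBridge] at hac
      push_neg at hac
      obtain ⟨e, he, hnb⟩ := hac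
      induction e using Sym2.ind with
      | _ a b =>
      have hadj : G.Adj a b := (SimpleGraph.mem_edgeSet G).mp he
      rw [SimpleGraph.isBridge_iff] at hnb
      push_neg at hnb
      have hreach : (G \ SimpleGraph.fromEdgeSet {s(a, b)}).Reachable a b := hnb
      set G' := G \ SimpleGraph.fromEdgeSet {s(a, b)} with hG'
      have hle : G' ≤ G := sdiff_le
      have hconn' : G'.Connected := connected_sdiff hc hreach
      have hlt : G'.edgeSet ⊂ G.edgeSet := by
        refine ⟨SimpleGraph.edgeSet_mono hle, fun hsub => ?_⟩
        have h1 : s(a, b) ∈ G'.edgeSet := hsub he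
        rw [SimpleGraph.mem_edgeSet, hG', SimpleGraph.sdiff_adj] at h1
        exact h1.2 (by rw [SimpleGraph.fromEdgeSet_adj]; exact ⟨rfl, hadj.ne⟩)
      have hn' : G'.edgeSet.ncard ≤ n := by
        have := Set.ncard_lt_ncard hlt (Set.toFinite _)
        omega
      have hA' : G'.IsIndepFinset A := fun u hu w hw hne hadj' =>
        hA u hu w hw hne (hle hadj')
      have hrad := radius_mono hle hconn'
      have := ih G' hn' hconn' A hA'
      omega

end IndepRadius

/-- For any finite connected simple graph, α(G) ≤ n(G) - r(G). -/
theorem indepNum_le_card_sub_radius {V : Type*} [Fintype V] [Nonempty V]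
    (G : SimpleGraph V) (hG : G.Connected) :
    (G.indepNum' : ℤ) ≤ (Fintype.card V : ℤ) - (G.graphRadius : ℤ) := by
  have hkey : ∀ A : Finset V, G.IsIndepFinset A →
      A.card + G.graphRadius ≤ Fintype.card V :=
    IndepRadius.key G.edgeSet.ncard G le_rfl hG
  have hrad : G.graphRadius ≤ Fintype.card V := by
    have := hkey ∅ (fun u hu => absurd hu (Finset.notMem_empty u))
    simpa using this
  have hsup : G.indepNum' ≤ Fintype.card V - G.graphRadius := by
    refine csSup_le ⟨0, ∅, fun u hu => absurd hu (Finset.notMem_empty u), rfl⟩ ?_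
    rintro m ⟨s, hs, rfl⟩
    have := hkey s hs
    omega
  omega
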